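/- Every extension of a sofic group by an amenable group is sofic: if N ⊴ G is sofic and G/N is amenable, then G is sofic. -/

import Mathlib

/-- Normalized Hamming distance on the symmetric group of a finite set. -/
noncomputable def hamDist {F : Type*} [Fintype F] (α β : Equiv.Perm F) : ℝ :=
  (Nat.card {f : F // α f ≠ β f} : ℝ) / (Fintype.card F : ℝ)

/-- A group is sofic if every finite subset admits `(K,ε)`-approximations into
finite symmetric groups with the normalized Hamming distance. -/
def IsSofic (G : Type*) [Group G] : Prop :=
  ∀ (K : Finset G) (ε : ℝ), 0 < ε →
    ∃ (F : Type) (_ : Fintype F) (_ : Nonempty F) (φ : G → Equiv.Perm F),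
      (∀ k₁ ∈ K, ∀ k₂ ∈ K, hamDist (φ (k₁ * k₂)) (φ k₁ * φ k₂) ≤ ε) ∧
      (∀ k₁ ∈ K, ∀ k₂ ∈ K, k₁ ≠ k₂ → 1 - ε ≤ hamDist (φ k₁) (φ k₂))

/-- Amenability via Følner sets: for every finite `S ⊆ G` and `ε > 0` there is a
nonempty finite `F ⊆ G` with `|F \ sF| < ε|F|` for all `s ∈ S`. -/
def IsAmenableFolner (G : Type*) [Group G] [DecidableEq G] : Prop :=
  ∀ (S : Finset G) (ε : ℝ), 0 < ε →
    ∃ F : Finset G, F.Nonempty ∧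
      ∀ s ∈ S, ((F \ F.image (s * ·)).card : ℝ) < ε * F.card

open Finset Pointwise

section Helpers

lemma hamDist_eq_filter {F : Type*} [Fintype F] (α β : Equiv.Perm F)
    [DecidablePred fun f => α f ≠ β f] :
    hamDist α β = ((univ.filter fun f => α f ≠ β f).card : ℝ) / (Fintype.card F : ℝ) := by
  rw [hamDist, Nat.card_eq_fintype_card, Fintype.card_subtype]

lemma hamDist_permCongr {F F' : Type*} [Fintype F] [Fintype F'] (e : F ≃ F')
    (α β : Equiv.Perm F) : hamDist (e.permCongr α) (e.permCongr β) = hamDist α β := by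
  unfold hamDist
  congr 1
  · have : {f : F // α f ≠ β f} ≃ {f' : F' // e.permCongr α f' ≠ e.permCongr β f'} := by
      refine Equiv.subtypeEquiv e fun f => ?_
      simp [Equiv.permCongr_apply]
    rw [Nat.card_congr this]
  · exact_mod_cast congrArg Nat.cast (Fintype.card_congr e).symm

lemma permCongr_mul {F F' : Type*} (e : F ≃ F') (α β : Equiv.Perm F) :
    e.permCongr (α * β) = e.permCongr α * e.permCongr β := by
  ext f; simp [Equiv.permCongr_apply, Equiv.Perm.mul_apply]

lemma exists_perm_extend {α : Type*} [Fintype α] [DecidableEq α]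
    (p : α → Prop) [DecidablePred p] (f : α → α)
    (hf : ∀ a b, p a → p b → f a = f b → a = b) :
    ∃ g : Equiv.Perm α, ∀ a, p a → g a = f a := by
  classical
  set t : Finset α := (univ.filter p).image f with ht
  have hmemt : ∀ a, p a → f a ∈ t := fun a ha => mem_image.2 ⟨a, by simp [ha], rfl⟩
  have hcard : Fintype.card {a // p a} = Fintype.card {a // a ∈ t} := by
    rw [Fintype.card_subtype, Fintype.card_coe, ht,
      card_image_of_injOn (fun a ha b hb hab => hf a b (by simpa using ha) (by simpa using hb) hab)]
  have hbij : Function.Bijective (fun a : {a // p a} => (⟨f a.1, hmemt a.1 a.2⟩ : {a // a ∈ t})) := by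
    rw [Fintype.bijective_iff_injective_and_card]
    exact ⟨fun ⟨a, ha⟩ ⟨b, hb⟩ hab => Subtype.ext (hf a b ha hb (by simpa using hab)), hcard⟩
  let e₁ : {a // p a} ≃ {a // a ∈ t} := Equiv.ofBijective _ hbij
  have he₁ : ∀ (a : α) (ha : p a), (e₁ ⟨a, ha⟩ : α) = f a := fun a ha => rfl
  have e₂ : {a // ¬ p a} ≃ {a // a ∉ t} := by
    refine Fintype.equivOfCardEq ?_
    rw [Fintype.card_subtype_compl, Fintype.card_subtype_compl, hcard]
  refine ⟨((Equiv.sumCompl p).symm.trans ((e₁.sumCongr e₂).trans (Equiv.sumCompl (· ∈ t)))), fun a ha => ?_⟩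
  simp only [Equiv.trans_apply, Equiv.sumCompl_symm_apply_of_pos (p := p) ha,
    Equiv.sumCongr_apply, Sum.map_inl, Equiv.sumCompl_apply_inl]
  exact he₁ a ha

lemma card_filter_prod {A B : Type*} [Fintype A] [Fintype B] (P : A × B → Prop) [DecidablePred P] :
    (univ.filter P).card = ∑ a : A, (univ.filter fun b => P (a, b)).card := by
  simp only [Finset.card_filter, Fintype.sum_prod_type]

lemma card_filter_attach {α : Type*} (s : Finset α) (p : α → Prop) [DecidablePred p] :
    (univ.filter fun q : {x // x ∈ s} => p ↑q).card = (s.filter p).card := by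
  simp only [Finset.card_filter, Finset.univ_eq_attach]
  exact Finset.sum_attach s fun i => if p i then 1 else 0

lemma folner_count {Q : Type*} [Group Q] [DecidableEq Q] (F₀ : Finset Q) (s : Q) :
    (F₀.filter fun q => s * q ∉ F₀).card = (F₀ \ F₀.image (s * ·)).card := by
  have hinj : Function.Injective (s * ·) := mul_right_injective s
  have h1 : (F₀.filter fun q => s * q ∉ F₀).image (s * ·) = (F₀.image (s * ·)) \ F₀ := by
    ext x
    simp only [mem_image, mem_filter, mem_sdiff]
    constructor
    · rintro ⟨q, ⟨hq, hnq⟩, rfl⟩; exact ⟨⟨q, hq, rfl⟩, hnq⟩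
    · rintro ⟨⟨q, hq, rfl⟩, hnx⟩; exact ⟨q, ⟨hq, hnx⟩, rfl⟩
  have hcard1 : (F₀.filter fun q => s * q ∉ F₀).card = ((F₀.image (s * ·)) \ F₀).card := by
    rw [← h1, card_image_of_injective _ hinj]
  have him : (F₀.image (s * ·)).card = F₀.card := card_image_of_injective _ hinj
  have a1 := card_sdiff_add_card_inter (F₀.image (s * ·)) F₀
  have a2 := card_sdiff_add_card_inter F₀ (F₀.image (s * ·))
  rw [inter_comm] at a1
  omega

end Helpers

section Cocycle

variable {G : Type*} [Group G] (N : Subgroup G) [N.Normal]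

/-- The cocycle of the extension associated to the section `Quotient.out`. -/
noncomputable def coc (g : G) (q : G ⧸ N) : N :=
  ⟨(Quotient.out ((g : G ⧸ N) * q))⁻¹ * (g * Quotient.out q), by
    rw [← QuotientGroup.eq_one_iff]
    simp only [QuotientGroup.mk_mul, QuotientGroup.mk_inv, QuotientGroup.out_eq']
    exact inv_mul_cancel _⟩

lemma coc_cocycle (g h : G) (q : G ⧸ N) :
    coc N (g * h) q = coc N g ((h : G ⧸ N) * q) * coc N h q := by
  apply Subtype.ext
  have hq : ((g * h : G) : G ⧸ N) * q = (g : G ⧸ N) * ((h : G ⧸ N) * q) := by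
    rw [QuotientGroup.mk_mul, mul_assoc]
  show (Quotient.out (((g * h : G) : G ⧸ N) * q))⁻¹ * (g * h * Quotient.out q)
      = ((Quotient.out ((g : G ⧸ N) * ((h : G ⧸ N) * q)))⁻¹ * (g * Quotient.out ((h : G ⧸ N) * q)))
        * ((Quotient.out ((h : G ⧸ N) * q))⁻¹ * (h * Quotient.out q))
  rw [hq]
  group

lemma coc_inj (k₁ k₂ : G) (q : G ⧸ N) (h : (k₁ : G ⧸ N) = (k₂ : G ⧸ N))
    (hc : coc N k₁ q = coc N k₂ q) : k₁ = k₂ := by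
  have h2 : (Quotient.out ((k₁ : G ⧸ N) * q))⁻¹ * (k₁ * Quotient.out q)
      = (Quotient.out ((k₂ : G ⧸ N) * q))⁻¹ * (k₂ * Quotient.out q) := congrArg Subtype.val hc
  rw [h] at h2
  exact mul_right_cancel (mul_left_cancel h2)

end Cocycle

/-- Elek–Szabó: an extension of a sofic group by an amenable group is sofic. -/
theorem sofic_by_amenable {G : Type*} [Group G] [DecidableEq G]
    (N : Subgroup G) [N.Normal] [DecidableEq (G ⧸ N)]
    (hN : IsSofic N) (hQ : IsAmenableFolner (G ⧸ N)) : IsSofic G := by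
  classical
  intro K ε hε
  obtain ⟨F₀, hF₀ne, hFol⟩ := hQ ((K ∪ K * K).image (QuotientGroup.mk : G → G ⧸ N)) (ε/4) (by positivity)
  have hF₀pos : 0 < F₀.card := Finset.card_pos.mpr hF₀ne
  have hF₀posR : (0:ℝ) < F₀.card := by exact_mod_cast hF₀pos
  set KN : Finset N := (K ×ˢ F₀).image (fun p => coc N p.1 p.2) with hKN
  obtain ⟨E, instE, instNE, ψ, hψmul, hψsep⟩ := hN KN (ε/2) (by positivity)
  have hEpos : (0:ℝ) < Fintype.card E := by exact_mod_cast Fintype.card_pos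
  have hKNmem : ∀ k ∈ K, ∀ q ∈ F₀, coc N k q ∈ KN := fun k hk q hq =>
    Finset.mem_image.2 ⟨(k, q), Finset.mem_product.2 ⟨hk, hq⟩, rfl⟩
  have hcntmul : ∀ a ∈ KN, ∀ b ∈ KN,
      ((univ.filter fun e : E => ψ (a * b) e ≠ (ψ a * ψ b) e).card : ℝ)
        ≤ ε/2 * Fintype.card E := by
    intro a ha b hb
    have h := hψmul a ha b hb
    rw [hamDist_eq_filter, div_le_iff₀ hEpos] at h
    exact h
  have hcntsep : ∀ a ∈ KN, ∀ b ∈ KN, a ≠ b →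
      (1 - ε/2) * Fintype.card E ≤ ((univ.filter fun e : E => ψ a e ≠ ψ b e).card : ℝ) := by
    intro a ha b hb hab
    have h := hψsep a ha b hb hab
    rw [hamDist_eq_filter, le_div_iff₀ hEpos] at h
    exact h
  have hbad : ∀ s ∈ K ∪ K * K,
      ((univ.filter fun q : {x // x ∈ F₀} => ¬ ((s : G ⧸ N) * ↑q ∈ F₀)).card : ℝ)
        < ε/4 * F₀.card := by
    intro s hs
    rw [card_filter_attach F₀ (fun x => ¬ ((s : G ⧸ N) * x ∈ F₀)), folner_count]
    exact hFol _ (Finset.mem_image_of_mem _ hs)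
  have hrex : ∀ g : G, ∃ r : Equiv.Perm {x // x ∈ F₀},
      ∀ (q : {x // x ∈ F₀}) (h : (g : G ⧸ N) * ↑q ∈ F₀), r q = ⟨(g : G ⧸ N) * ↑q, h⟩ := by
    intro g
    let fg : {x // x ∈ F₀} → {x // x ∈ F₀} :=
      fun q => if h : (g : G ⧸ N) * (q : G ⧸ N) ∈ F₀ then ⟨(g : G ⧸ N) * (q : G ⧸ N), h⟩ else q
    have hinj : ∀ a b : {x // x ∈ F₀}, ((g : G ⧸ N) * ↑a ∈ F₀) → ((g : G ⧸ N) * ↑b ∈ F₀) →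
        fg a = fg b → a = b := by
      intro a b ha hb hab
      simp only [fg, dif_pos ha, dif_pos hb, Subtype.mk.injEq] at hab
      exact Subtype.ext (mul_left_cancel hab)
    obtain ⟨r, hr⟩ := exists_perm_extend (fun q : {x // x ∈ F₀} => (g : G ⧸ N) * ↑q ∈ F₀) fg hinj
    refine ⟨r, fun q h => ?_⟩
    rw [hr q h]
    simp only [fg, dif_pos h]
  choose r hrspec using hrex
  set Φ : G → Equiv.Perm ({x // x ∈ F₀} × E) :=
    fun g => Equiv.prodShear (r g) (fun q => ψ (coc N g ↑q)) with hΦ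
  have hΦapply : ∀ (g : G) (q : {x // x ∈ F₀}) (e : E),
      Φ g (q, e) = (r g q, ψ (coc N g ↑q) e) := fun g q e => rfl
  set eFin : ({x // x ∈ F₀} × E) ≃ (Fin F₀.card × E) :=
    Equiv.prodCongr F₀.equivFin (Equiv.refl E) with heFin
  have hD : (Fintype.card ({x // x ∈ F₀} × E) : ℝ) = F₀.card * Fintype.card E := by
    rw [Fintype.card_prod, Fintype.card_coe]; push_cast; ring
  have hDpos : (0:ℝ) < Fintype.card ({x // x ∈ F₀} × E) := by
    rw [hD]; positivity
  refine ⟨Fin F₀.card × E, inferInstance, ⟨⟨⟨0, hF₀pos⟩, Classical.arbitrary E⟩⟩,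
    fun g => eFin.permCongr (Φ g), ?_, ?_⟩
  · -- multiplicativity
    intro k₁ hk₁ k₂ hk₂
    rw [← permCongr_mul, hamDist_permCongr, hamDist_eq_filter, div_le_iff₀ hDpos, hD,
      card_filter_prod, Nat.cast_sum]
    have hfiber : ∀ q : {x // x ∈ F₀},
        ((univ.filter fun e : E => Φ (k₁ * k₂) (q, e) ≠ (Φ k₁ * Φ k₂) (q, e)).card : ℝ)
          ≤ if ((k₂ : G ⧸ N) * ↑q ∈ F₀ ∧ (k₁ : G ⧸ N) * ((k₂ : G ⧸ N) * ↑q) ∈ F₀)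
            then ε/2 * Fintype.card E else Fintype.card E := by
      intro q
      by_cases hg : ((k₂ : G ⧸ N) * ↑q ∈ F₀ ∧ (k₁ : G ⧸ N) * ((k₂ : G ⧸ N) * ↑q) ∈ F₀)
      · rw [if_pos hg]
        obtain ⟨h2, h12⟩ := hg
        have h12' : ((k₁ * k₂ : G) : G ⧸ N) * ↑q ∈ F₀ := by
          rwa [QuotientGroup.mk_mul, mul_assoc]
        have hsub : (univ.filter fun e : E => Φ (k₁ * k₂) (q, e) ≠ (Φ k₁ * Φ k₂) (q, e))
            ⊆ (univ.filter fun e : E =>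
                ψ (coc N k₁ ((k₂ : G ⧸ N) * ↑q) * coc N k₂ ↑q) e
                  ≠ (ψ (coc N k₁ ((k₂ : G ⧸ N) * ↑q)) * ψ (coc N k₂ ↑q)) e) := by
          intro e he
          simp only [Finset.mem_filter, Finset.mem_univ, true_and] at he ⊢
          intro hcon
          apply he
          show Φ (k₁ * k₂) (q, e) = Φ k₁ (Φ k₂ (q, e))
          have eq1 : Φ k₂ (q, e) = (⟨(k₂ : G ⧸ N) * ↑q, h2⟩, ψ (coc N k₂ ↑q) e) := by
            rw [hΦapply, hrspec k₂ q h2]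
          have eq2 : Φ k₁ ((⟨(k₂ : G ⧸ N) * ↑q, h2⟩ : {x // x ∈ F₀}), ψ (coc N k₂ ↑q) e)
              = (⟨(k₁ : G ⧸ N) * ((k₂ : G ⧸ N) * ↑q), h12⟩,
                  ψ (coc N k₁ ((k₂ : G ⧸ N) * ↑q)) (ψ (coc N k₂ ↑q) e)) := by
            rw [hΦapply, hrspec k₁ ⟨(k₂ : G ⧸ N) * ↑q, h2⟩ h12]
          have eq3 : Φ (k₁ * k₂) (q, e)
              = (⟨((k₁ * k₂ : G) : G ⧸ N) * ↑q, h12'⟩, ψ (coc N (k₁ * k₂) ↑q) e) := by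
            rw [hΦapply, hrspec (k₁ * k₂) q h12']
          rw [eq3, eq1, eq2]
          simp only [Prod.mk.injEq]
          constructor
          · refine Subtype.ext ?_
            show ((k₁ * k₂ : G) : G ⧸ N) * ↑q = (k₁ : G ⧸ N) * ((k₂ : G ⧸ N) * ↑q)
            rw [QuotientGroup.mk_mul, mul_assoc]
          · show ψ (coc N (k₁ * k₂) ↑q) e = ψ (coc N k₁ ((k₂ : G ⧸ N) * ↑q)) (ψ (coc N k₂ ↑q) e)
            rw [coc_cocycle, hcon, Equiv.Perm.mul_apply]
        calc ((univ.filter fun e : E => Φ (k₁ * k₂) (q, e) ≠ (Φ k₁ * Φ k₂) (q, e)).card : ℝ)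
            ≤ _ := by exact_mod_cast Finset.card_le_card hsub
          _ ≤ ε/2 * Fintype.card E :=
              hcntmul _ (hKNmem k₁ hk₁ _ h2) _ (hKNmem k₂ hk₂ _ q.2)
      · rw [if_neg hg]
        calc ((univ.filter fun e : E => Φ (k₁ * k₂) (q, e) ≠ (Φ k₁ * Φ k₂) (q, e)).card : ℝ)
            ≤ ((univ : Finset E).card : ℝ) := by
              exact_mod_cast Finset.card_le_card (Finset.filter_subset _ _)
          _ = Fintype.card E := by rw [Finset.card_univ]
    have hsum := Finset.sum_le_sum (fun q (_ : q ∈ (univ : Finset {x // x ∈ F₀})) => hfiber q)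
    refine hsum.trans ?_
    rw [Finset.sum_ite, Finset.sum_const, Finset.sum_const, nsmul_eq_mul, nsmul_eq_mul]
    have hPgood : ((univ.filter fun q : {x // x ∈ F₀} =>
        ((k₂ : G ⧸ N) * ↑q ∈ F₀ ∧ (k₁ : G ⧸ N) * ((k₂ : G ⧸ N) * ↑q) ∈ F₀)).card : ℝ)
          ≤ F₀.card := by
      have := Finset.card_filter_le (univ : Finset {x // x ∈ F₀})
        (fun q => ((k₂ : G ⧸ N) * ↑q ∈ F₀ ∧ (k₁ : G ⧸ N) * ((k₂ : G ⧸ N) * ↑q) ∈ F₀))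
      rw [Finset.card_univ, Fintype.card_coe] at this
      exact_mod_cast this
    have hPbad : ((univ.filter fun q : {x // x ∈ F₀} =>
        ¬((k₂ : G ⧸ N) * ↑q ∈ F₀ ∧ (k₁ : G ⧸ N) * ((k₂ : G ⧸ N) * ↑q) ∈ F₀)).card : ℝ)
          ≤ ε/2 * F₀.card := by
      have hsubs : (univ.filter fun q : {x // x ∈ F₀} =>
          ¬((k₂ : G ⧸ N) * ↑q ∈ F₀ ∧ (k₁ : G ⧸ N) * ((k₂ : G ⧸ N) * ↑q) ∈ F₀))
          ⊆ (univ.filter fun q : {x // x ∈ F₀} => ¬ ((k₂ : G ⧸ N) * ↑q ∈ F₀))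
            ∪ (univ.filter fun q : {x // x ∈ F₀} => ¬ (((k₁ * k₂ : G) : G ⧸ N) * ↑q ∈ F₀)) := by
        intro q hq
        simp only [Finset.mem_filter, Finset.mem_univ, true_and, Finset.mem_union,
          QuotientGroup.mk_mul, mul_assoc] at hq ⊢
        tauto
      have h1 := hbad k₂ (Finset.mem_union_left _ hk₂)
      have h2 := hbad (k₁ * k₂) (Finset.mem_union_right _ (Finset.mul_mem_mul hk₁ hk₂))
      have h3 := (Finset.card_le_card hsubs).trans (Finset.card_union_le _ _)
      have h3' : ((univ.filter fun q : {x // x ∈ F₀} =>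
          ¬((k₂ : G ⧸ N) * ↑q ∈ F₀ ∧ (k₁ : G ⧸ N) * ((k₂ : G ⧸ N) * ↑q) ∈ F₀)).card : ℝ)
          ≤ ((univ.filter fun q : {x // x ∈ F₀} => ¬ ((k₂ : G ⧸ N) * ↑q ∈ F₀)).card : ℝ)
            + ((univ.filter fun q : {x // x ∈ F₀} =>
                ¬ (((k₁ * k₂ : G) : G ⧸ N) * ↑q ∈ F₀)).card : ℝ) := by
        exact_mod_cast h3
      linarith
    have hcE : (0:ℝ) ≤ Fintype.card E := le_of_lt hEpos
    nlinarith [mul_le_mul_of_nonneg_right hPgood (by positivity : (0:ℝ) ≤ ε/2 * Fintype.card E),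
      mul_le_mul_of_nonneg_right hPbad hcE]
  · -- separation
    intro k₁ hk₁ k₂ hk₂ hne
    rw [hamDist_permCongr, hamDist_eq_filter, le_div_iff₀ hDpos, hD]
    by_cases hcase : (k₁ : G ⧸ N) = (k₂ : G ⧸ N)
    · -- same coset: use cocycle separation
      have hsub : (univ.filter fun p : {x // x ∈ F₀} × E =>
            ψ (coc N k₁ ↑p.1) p.2 ≠ ψ (coc N k₂ ↑p.1) p.2)
          ⊆ (univ.filter fun p : {x // x ∈ F₀} × E => Φ k₁ p ≠ Φ k₂ p) := by
        intro p hp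
        simp only [Finset.mem_filter, Finset.mem_univ, true_and] at hp ⊢
        intro hcon
        apply hp
        have := congrArg Prod.snd hcon
        simpa [hΦapply] using this
      have hlow : ∀ q : {x // x ∈ F₀},
          (1 - ε/2) * Fintype.card E
            ≤ ((univ.filter fun e : E => ψ (coc N k₁ ↑q) e ≠ ψ (coc N k₂ ↑q) e).card : ℝ) := by
        intro q
        refine hcntsep _ (hKNmem k₁ hk₁ _ q.2) _ (hKNmem k₂ hk₂ _ q.2) ?_
        intro hcc
        exact hne (coc_inj N k₁ k₂ ↑q hcase hcc)
      have hsum : ((univ.filter fun p : {x // x ∈ F₀} × E =>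
            ψ (coc N k₁ ↑p.1) p.2 ≠ ψ (coc N k₂ ↑p.1) p.2).card : ℝ)
          ≥ (F₀.card : ℝ) * ((1 - ε/2) * Fintype.card E) := by
        rw [card_filter_prod, Nat.cast_sum]
        calc (F₀.card : ℝ) * ((1 - ε/2) * Fintype.card E)
            = ∑ _q : {x // x ∈ F₀}, (1 - ε/2) * (Fintype.card E : ℝ) := by
              rw [Finset.sum_const, Finset.card_univ, Fintype.card_coe, nsmul_eq_mul]
          _ ≤ _ := Finset.sum_le_sum (fun q _ => hlow q)
      have hmono : ((univ.filter fun p : {x // x ∈ F₀} × E =>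
            ψ (coc N k₁ ↑p.1) p.2 ≠ ψ (coc N k₂ ↑p.1) p.2).card : ℝ)
          ≤ ((univ.filter fun p : {x // x ∈ F₀} × E => Φ k₁ p ≠ Φ k₂ p).card : ℝ) := by
        exact_mod_cast Finset.card_le_card hsub
      nlinarith [mul_nonneg (le_of_lt hF₀posR) (le_of_lt hEpos)]
    · -- different cosets: use first-coordinate separation
      have hgoodsub : (univ.filter fun p : {x // x ∈ F₀} × E =>
            (k₁ : G ⧸ N) * ↑p.1 ∈ F₀ ∧ (k₂ : G ⧸ N) * ↑p.1 ∈ F₀)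
          ⊆ (univ.filter fun p : {x // x ∈ F₀} × E => Φ k₁ p ≠ Φ k₂ p) := by
        intro p hp
        simp only [Finset.mem_filter, Finset.mem_univ, true_and] at hp ⊢
        obtain ⟨h1, h2⟩ := hp
        intro hcon
        have := congrArg Prod.fst hcon
        rw [hΦapply k₁ p.1 p.2, hΦapply k₂ p.1 p.2] at this
        simp only at this
        rw [hrspec k₁ p.1 h1, hrspec k₂ p.1 h2] at this
        have hval := congrArg Subtype.val this
        exact hcase (mul_right_cancel hval)
      have hcard1 : (univ.filter fun p : {x // x ∈ F₀} × E =>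
            (k₁ : G ⧸ N) * ↑p.1 ∈ F₀ ∧ (k₂ : G ⧸ N) * ↑p.1 ∈ F₀).card
          = (univ.filter fun q : {x // x ∈ F₀} =>
              (k₁ : G ⧸ N) * ↑q ∈ F₀ ∧ (k₂ : G ⧸ N) * ↑q ∈ F₀).card * Fintype.card E := by
        rw [card_filter_prod]
        have hper : ∀ q : {x // x ∈ F₀},
            (univ.filter fun _e : E =>
              (k₁ : G ⧸ N) * ↑q ∈ F₀ ∧ (k₂ : G ⧸ N) * ↑q ∈ F₀).card
            = if ((k₁ : G ⧸ N) * ↑q ∈ F₀ ∧ (k₂ : G ⧸ N) * ↑q ∈ F₀)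
              then Fintype.card E else 0 := by
          intro q
          by_cases hg : ((k₁ : G ⧸ N) * ↑q ∈ F₀ ∧ (k₂ : G ⧸ N) * ↑q ∈ F₀)
          · simp [hg]
          · simp [hg]
        rw [Finset.sum_congr rfl (fun q _ => hper q), ← Finset.sum_filter, Finset.sum_const,
          smul_eq_mul]
      have hgoodcard : (1 - ε/2) * F₀.card
          ≤ ((univ.filter fun q : {x // x ∈ F₀} =>
              (k₁ : G ⧸ N) * ↑q ∈ F₀ ∧ (k₂ : G ⧸ N) * ↑q ∈ F₀).card : ℝ) := by
        have hsplit := Finset.card_filter_add_card_filter_not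
          (s := (univ : Finset {x // x ∈ F₀}))
          (fun q : {x // x ∈ F₀} => (k₁ : G ⧸ N) * ↑q ∈ F₀ ∧ (k₂ : G ⧸ N) * ↑q ∈ F₀)
        have hsubs : (univ.filter fun q : {x // x ∈ F₀} =>
            ¬((k₁ : G ⧸ N) * ↑q ∈ F₀ ∧ (k₂ : G ⧸ N) * ↑q ∈ F₀))
            ⊆ (univ.filter fun q : {x // x ∈ F₀} => ¬ ((k₁ : G ⧸ N) * ↑q ∈ F₀))
              ∪ (univ.filter fun q : {x // x ∈ F₀} => ¬ ((k₂ : G ⧸ N) * ↑q ∈ F₀)) := by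
          intro q hq
          simp only [Finset.mem_filter, Finset.mem_univ, true_and, Finset.mem_union] at hq ⊢
          tauto
        have h1 := hbad k₁ (Finset.mem_union_left _ hk₁)
        have h2 := hbad k₂ (Finset.mem_union_left _ hk₂)
        have h3 := (Finset.card_le_card hsubs).trans (Finset.card_union_le _ _)
        have h3' : ((univ.filter fun q : {x // x ∈ F₀} =>
            ¬((k₁ : G ⧸ N) * ↑q ∈ F₀ ∧ (k₂ : G ⧸ N) * ↑q ∈ F₀)).card : ℝ)
            ≤ ((univ.filter fun q : {x // x ∈ F₀} => ¬ ((k₁ : G ⧸ N) * ↑q ∈ F₀)).card : ℝ)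
              + ((univ.filter fun q : {x // x ∈ F₀} => ¬ ((k₂ : G ⧸ N) * ↑q ∈ F₀)).card : ℝ) := by
          exact_mod_cast h3
        have hcu : ((univ : Finset {x // x ∈ F₀}).card : ℝ) = F₀.card := by
          rw [Finset.card_univ, Fintype.card_coe]
        have hsplit' : ((univ.filter fun q : {x // x ∈ F₀} =>
            (k₁ : G ⧸ N) * ↑q ∈ F₀ ∧ (k₂ : G ⧸ N) * ↑q ∈ F₀).card : ℝ)
            + ((univ.filter fun q : {x // x ∈ F₀} =>
              ¬((k₁ : G ⧸ N) * ↑q ∈ F₀ ∧ (k₂ : G ⧸ N) * ↑q ∈ F₀)).card : ℝ)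
            = F₀.card := by
          rw [← hcu]; exact_mod_cast hsplit
        linarith
      have hmono : ((univ.filter fun p : {x // x ∈ F₀} × E =>
            (k₁ : G ⧸ N) * ↑p.1 ∈ F₀ ∧ (k₂ : G ⧸ N) * ↑p.1 ∈ F₀).card : ℝ)
          ≤ ((univ.filter fun p : {x // x ∈ F₀} × E => Φ k₁ p ≠ Φ k₂ p).card : ℝ) := by
        exact_mod_cast Finset.card_le_card hgoodsub
      rw [hcard1, Nat.cast_mul] at hmono
      nlinarith [mul_nonneg (le_of_lt hF₀posR) (le_of_lt hEpos)]
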